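/- Let X, Y be Banach spaces and T : X → Y* a bounded linear operator that is strongly non-surjective, i.e., for every n ∈ ℕ there exist ρ_n ∈ T(X) with ‖ρ_n‖ ≤ 1/n and a weak*-open neighborhood U_n of ρ_n with U_n ∩ T(B_X) = ∅. Then there exists a sequence v_n ∈ Y with ‖v_n‖_Y ≥ 1 and sup_{x ∈ B_X} |⟨T(x), v_n⟩| ≤ 1/n for every n. -/

import Mathlib

open NormedSpace Topology Filter

set_option maxHeartbeats 1000000 in
/-- Every continuous linear functional on `WeakDual ℝ Y` is evaluation at a point of `Y`. -/
lemma weakDual_repr {Y : Type*} [NormedAddCommGroup Y] [NormedSpace ℝ Y]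
    (f : WeakDual ℝ Y →L[ℝ] ℝ) : ∃ v : Y, ∀ φ : WeakDual ℝ Y, f φ = φ v := by
  obtain ⟨v, hv⟩ := LinearMap.dualEmbedding_surjective (topDualPairing ℝ Y) f
  exact ⟨v, fun φ => by rw [← hv]; rfl⟩

/-- **predual separation theorem.**
Let `X, Y` be Banach spaces and `T : X → Y*` a bounded linear operator which is
strongly non-surjective: for every `n ≥ 1` there are `ρ_n ∈ T(X)` with
`‖ρ_n‖ ≤ 1/n` and a weak*-open neighbourhood `U_n` of `ρ_n` with
`U_n ∩ T(B_X) = ∅`.  Then there is a sequence `v_n ∈ Y` with `‖v_n‖ ≥ 1` and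
`sup_{x ∈ B_X} |⟨T x, v_n⟩| ≤ 1/n`. -/
theorem statement7 (X Y : Type*)
    [NormedAddCommGroup X] [NormedSpace ℝ X] [CompleteSpace X]
    [NormedAddCommGroup Y] [NormedSpace ℝ Y] [CompleteSpace Y]
    (T : X →L[ℝ] StrongDual ℝ Y)
    (hT : ∀ n : ℕ, 0 < n → ∃ (ρ : StrongDual ℝ Y) (U : Set (WeakDual ℝ Y)),
      (∃ x, T x = ρ) ∧ ‖ρ‖ ≤ 1 / n ∧ IsOpen U ∧
      StrongDual.toWeakDual ρ ∈ U ∧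
      ∀ x : X, ‖x‖ ≤ 1 → StrongDual.toWeakDual (T x) ∉ U) :
    ∃ v : ℕ → Y, ∀ n : ℕ, 0 < n →
      1 ≤ ‖v n‖ ∧ ∀ x : X, ‖x‖ ≤ 1 → |T x (v n)| ≤ 1 / n := by
  have H : ∀ n : ℕ, ∃ v : Y, 0 < n →
      (1 ≤ ‖v‖ ∧ ∀ x : X, ‖x‖ ≤ 1 → |T x v| ≤ 1 / n) := by
    intro n
    rcases Nat.eq_zero_or_pos n with hn | hn
    · exact ⟨0, fun h => absurd hn h.ne'⟩
    obtain ⟨ρ, U, ⟨x₀, hx₀⟩, hρn, hUopen, hρU, hdisj⟩ := hT n hn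
    -- the image of the unit ball in the weak dual
    set G : X →ₗ[ℝ] WeakDual ℝ Y :=
      (StrongDual.toWeakDual : StrongDual ℝ Y ≃ₗ[ℝ] WeakDual ℝ Y).toLinearMap ∘ₗ (T : X →ₗ[ℝ] StrongDual ℝ Y)
      with hG
    set A : Set (WeakDual ℝ Y) := closure (G '' Metric.closedBall 0 1) with hA
    have hconv : Convex ℝ A :=
      ((convex_closedBall (0 : X) 1).linear_image G).closure
    have hclosed : IsClosed A := isClosed_closure
    have hρA : StrongDual.toWeakDual ρ ∉ A := by
      intro hmem
      rcases mem_closure_iff.mp hmem U hUopen hρU with ⟨ψ, hψU, ⟨x, hx, rfl⟩⟩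
      rw [Metric.mem_closedBall, dist_zero_right] at hx
      exact hdisj x hx hψU
    haveI : LocallyConvexSpace ℝ (WeakDual ℝ Y) :=
      WeakBilin.locallyConvexSpace (B := topDualPairing ℝ Y)
    obtain ⟨f, u, hfa, hfρ⟩ := geometric_hahn_banach_closed_point hconv hclosed hρA
    obtain ⟨v₀, hv₀⟩ := weakDual_repr f
    -- u > 0
    have h0A : (0 : WeakDual ℝ Y) ∈ A := by
      apply subset_closure
      exact ⟨0, by simp, by simp [hG]⟩
    have hu0 : 0 < u := by
      have := hfa 0 h0A
      rwa [map_zero] at this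
    -- bound on the unit ball
    have hball : ∀ x : X, ‖x‖ ≤ 1 → |T x v₀| ≤ u := by
      intro x hx
      have hmem : ∀ z : X, ‖z‖ ≤ 1 → (T z) v₀ < u := by
        intro z hz
        have : G z ∈ A := subset_closure ⟨z, by simpa using hz, rfl⟩
        have := hfa _ this
        rwa [hv₀] at this
      rw [abs_le]
      constructor
      · have := hmem (-x) (by simpa using hx)
        simp only [map_neg, ContinuousLinearMap.neg_apply] at this
        linarith
      · exact le_of_lt (hmem x hx)
    -- lower bound on ρ v₀
    have hρv : u < ρ v₀ := by
      have := hfρ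
      rwa [hv₀] at this
    have hρv' : ρ v₀ ≤ (1 / n) * ‖v₀‖ := by
      calc ρ v₀ ≤ |ρ v₀| := le_abs_self _
        _ ≤ ‖ρ‖ * ‖v₀‖ := ρ.le_opNorm v₀
        _ ≤ (1 / n) * ‖v₀‖ := by
            apply mul_le_mul_of_nonneg_right hρn (norm_nonneg _)
    have hnpos : (0 : ℝ) < n := by exact_mod_cast hn
    have hnorm : u * n ≤ ‖v₀‖ := by
      have : u < (1 / n) * ‖v₀‖ := lt_of_lt_of_le hρv hρv'
      rw [div_mul_eq_mul_div, one_mul, lt_div_iff₀ hnpos] at this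
      linarith
    refine ⟨(1 / (u * n)) • v₀, fun _ => ⟨?_, ?_⟩⟩
    · rw [norm_smul, Real.norm_eq_abs, abs_of_pos (by positivity)]
      rw [div_mul_eq_mul_div, one_mul, le_div_iff₀ (by positivity), one_mul]
      exact hnorm
    · intro x hx
      rw [map_smul, smul_eq_mul, abs_mul, abs_of_pos (show (0:ℝ) < 1 / (u * n) by positivity)]
      calc (1 / (u * n)) * |T x v₀| ≤ (1 / (u * n)) * u := by
            apply mul_le_mul_of_nonneg_left (hball x hx) (by positivity)
        _ = 1 / n := by
            field_simp
  choose v hv using H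
  exact ⟨v, fun n hn => hv n hn⟩
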